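/- Every 2-dimensional Lie subalgebra of $sl_2(k)$ (with char $k \neq 2$, $k$ algebraically closed) is equal to one of: (i) $kf + kh$, (ii) $ke + kh$, or (iii) $k(e + ah) + k(-4af + h)$ for some $a \in k^\times$, where $\{e, f, h\}$ is the standard basis with $[h,e] = 2e$, $[h,f] = -2f$, $[e,f] = h$. -/

import Mathlib

noncomputable section

open Module

/-- Every 2-dimensional Lie subalgebra of `sl₂(k)` (k algebraically closed,
char k ≠ 2, presented by its standard basis `e, f, h` with `[e,f] = h`,
`[h,e] = 2e`, `[h,f] = -2f`) is `kf + kh`, `ke + kh`, or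
`k(e + ah) + k(-4af + h)` for some `a ∈ kˣ`. -/
theorem two_dim_subalgebras_of_sl2
    (k : Type*) [Field k] [IsAlgClosed k] (hchar : (2 : k) ≠ 0)
    {L : Type*} [LieRing L] [LieAlgebra k L]
    (b : Basis (Fin 3) k L)
    (e f h : L) (he : e = b 0) (hf : f = b 1) (hh : h = b 2)
    (hef : ⁅e, f⁆ = h) (hhe : ⁅h, e⁆ = (2 : k) • e) (hhf : ⁅h, f⁆ = -((2 : k) • f))
    (S : LieSubalgebra k L)
    (hS : Module.finrank k S = 2) :
    S.toSubmodule = Submodule.span k {f, h} ∨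
    S.toSubmodule = Submodule.span k {e, h} ∨
    ∃ a : k, a ≠ 0 ∧
      S.toSubmodule = Submodule.span k {e + a • h, -((4 * a) • f) + h} := by
  haveI : FiniteDimensional k L := Module.Finite.of_basis b
  have h3 : finrank k L = 3 := by
    rw [finrank_eq_card_basis b, Fintype.card_fin]
  have hS' : finrank k S.toSubmodule = 2 := hS
  -- obtain a nonzero functional φ with S = ker φ
  have hann : finrank k (S.toSubmodule.dualAnnihilator) = 1 := by
    have h1 : finrank k (L ⧸ S.toSubmodule) = finrank k S.toSubmodule.dualAnnihilator :=
      LinearEquiv.finrank_eq (Subspace.quotEquivAnnihilator S.toSubmodule)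
    have h2 := Submodule.finrank_quotient_add_finrank S.toSubmodule
    omega
  obtain ⟨φ, hφmem, hφne⟩ :
      ∃ φ : Module.Dual k L, φ ∈ S.toSubmodule.dualAnnihilator ∧ φ ≠ 0 := by
    have : S.toSubmodule.dualAnnihilator ≠ ⊥ := by
      intro hbot
      rw [hbot] at hann
      simp at hann
    obtain ⟨φ, hm, hn⟩ := Submodule.exists_mem_ne_zero_of_ne_bot this
    exact ⟨φ, hm, hn⟩
  rw [Submodule.mem_dualAnnihilator] at hφmem
  have hle : S.toSubmodule ≤ LinearMap.ker φ := fun x hx => LinearMap.mem_ker.mpr (hφmem x hx)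
  have hker2 : finrank k (LinearMap.ker φ) = 2 := by
    obtain ⟨x, hx⟩ := DFunLike.ne_iff.mp hφne
    have hx' : φ x ≠ 0 := by simpa using hx
    have hrange : LinearMap.range φ = ⊤ := by
      rw [LinearMap.range_eq_top]
      intro c
      exact ⟨(c / φ x) • x, by simp [div_mul_cancel₀, hx']⟩
    have h1 := LinearMap.finrank_range_add_finrank_ker φ
    rw [hrange] at h1
    simp only [finrank_top, finrank_self] at h1
    omega
  have hSeq : S.toSubmodule = LinearMap.ker φ :=
    Submodule.eq_of_le_of_finrank_le hle (by omega)
  -- bracket relations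
  have heh : ⁅e, h⁆ = -((2 : k) • e) := by rw [← lie_skew, hhe]
  have hfe : ⁅f, e⁆ = -h := by rw [← lie_skew, hef]
  have hfh : ⁅f, h⁆ = (2 : k) • f := by rw [← lie_skew, hhf, neg_neg]
  set p := φ e with hp
  set q := φ f with hq
  set r := φ h with hr
  have key : ∀ u v : L, φ u = 0 → φ v = 0 → φ ⁅u, v⁆ = 0 := by
    intro u v hu hv
    have hu' : u ∈ S := by
      rw [← LieSubalgebra.mem_toSubmodule, hSeq]; exact LinearMap.mem_ker.mpr hu
    have hv' : v ∈ S := by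
      rw [← LieSubalgebra.mem_toSubmodule, hSeq]; exact LinearMap.mem_ker.mpr hv
    have : ⁅u, v⁆ ∈ S := S.lie_mem hu' hv'
    rw [← LieSubalgebra.mem_toSubmodule, hSeq, LinearMap.mem_ker] at this
    exact this
  -- derive the equation r^2 + 4pq = 0
  have e1 : ⁅q • e - p • f, r • e - p • h⁆
      = (2 * (p * q)) • e + (2 * (p * p)) • f + (p * r) • h := by
    simp only [sub_lie, lie_sub, smul_lie, lie_smul, lie_self, heh, hfe, hfh, hef, hhe, hhf]
    module
  have e2 : ⁅q • e - p • f, r • f - q • h⁆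
      = (2 * (q * q)) • e + (2 * (p * q)) • f + (q * r) • h := by
    simp only [sub_lie, lie_sub, smul_lie, lie_smul, lie_self, heh, hfe, hfh, hef, hhe, hhf]
    module
  have e3 : ⁅r • e - p • h, r • f - q • h⁆
      = (2 * (q * r)) • e + (2 * (p * r)) • f + (r * r) • h := by
    simp only [sub_lie, lie_sub, smul_lie, lie_smul, lie_self, heh, hfe, hfh, hef, hhe, hhf]
    module
  have m1 : φ (q • e - p • f) = 0 := by
    simp only [map_sub, map_smul, smul_eq_mul, ← hp, ← hq]; ring
  have m2 : φ (r • e - p • h) = 0 := by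
    simp only [map_sub, map_smul, smul_eq_mul, ← hp, ← hr]; ring
  have m3 : φ (r • f - q • h) = 0 := by
    simp only [map_sub, map_smul, smul_eq_mul, ← hq, ← hr]; ring
  have H1 : p * (4 * (p * q) + r * r) = 0 := by
    have := key _ _ m1 m2
    rw [e1] at this
    simp only [map_add, map_smul, smul_eq_mul, ← hp, ← hq, ← hr] at this
    linear_combination this
  have H2 : q * (4 * (p * q) + r * r) = 0 := by
    have := key _ _ m1 m3
    rw [e2] at this
    simp only [map_add, map_smul, smul_eq_mul, ← hp, ← hq, ← hr] at this
    linear_combination this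
  have H3 : r * (4 * (p * q) + r * r) = 0 := by
    have := key _ _ m2 m3
    rw [e3] at this
    simp only [map_add, map_smul, smul_eq_mul, ← hp, ← hq, ← hr] at this
    linear_combination this
  have hnot : ¬ (p = 0 ∧ q = 0 ∧ r = 0) := by
    rintro ⟨hp0, hq0, hr0⟩
    apply hφne
    apply b.ext
    intro i
    fin_cases i
    · exact he ▸ hp0
    · exact hf ▸ hq0
    · exact hh ▸ hr0
  have hX : 4 * (p * q) + r * r = 0 := by
    by_contra hX
    exact hnot ⟨by rcases mul_eq_zero.mp H1 with h' | h' <;> tauto,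
      by rcases mul_eq_zero.mp H2 with h' | h' <;> tauto,
      by rcases mul_eq_zero.mp H3 with h' | h' <;> tauto⟩
  have h4 : (4 : k) ≠ 0 := by
    have : (4 : k) = 2 * 2 := by norm_num
    rw [this]
    exact mul_ne_zero hchar hchar
  -- span equality helper
  have spanEq : ∀ x y : L, φ x = 0 → φ y = 0 → LinearIndependent k ![x, y] →
      S.toSubmodule = Submodule.span k {x, y} := by
    intro x y hx hy hli
    refine (Submodule.eq_of_le_of_finrank_le ?_ ?_).symm
    · rw [hSeq, Submodule.span_le, Set.insert_subset_iff, Set.singleton_subset_iff]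
      exact ⟨LinearMap.mem_ker.mpr hx, LinearMap.mem_ker.mpr hy⟩
    · have hset : Set.range ![x, y] = ({x, y} : Set L) := by
        ext z
        simp [Fin.exists_fin_two, or_comm]
      rw [hS', ← hset, finrank_span_eq_card hli, Fintype.card_fin]
  by_cases hr0 : r = 0
  · have hpq : p * q = 0 := by
      rw [hr0] at hX
      have : 4 * (p * q) = 0 := by linear_combination hX
      exact (mul_eq_zero.mp this).resolve_left h4
    rcases mul_eq_zero.mp hpq with hp0 | hq0
    · -- p = 0, r = 0 : span {e, h}
      right; left
      have hli : LinearIndependent k ![e, h] := by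
        have : ![e, h] = b ∘ ![0, 2] := by
          funext i; fin_cases i <;> simp [he, hh]
        rw [this]
        exact b.linearIndependent.comp ![0, 2] (by decide)
      exact spanEq e h hp0 hr0 hli
    · -- q = 0, r = 0 : span {f, h}
      left
      have hli : LinearIndependent k ![f, h] := by
        have : ![f, h] = b ∘ ![1, 2] := by
          funext i; fin_cases i <;> simp [hf, hh]
        rw [this]
        exact b.linearIndependent.comp ![1, 2] (by decide)
      exact spanEq f h hq0 hr0 hli
  · -- r ≠ 0
    right; right
    have hq0 : q ≠ 0 := by
      intro hq0
      rw [hq0] at hX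
      apply hr0
      have : r * r = 0 := by linear_combination hX
      exact (mul_self_eq_zero.mp this)
    refine ⟨r / (4 * q), div_ne_zero hr0 (mul_ne_zero h4 hq0), ?_⟩
    set a := r / (4 * q) with ha
    have h4q : (4 : k) * q ≠ 0 := mul_ne_zero h4 hq0
    have hx : φ (e + a • h) = 0 := by
      simp only [map_add, map_smul, smul_eq_mul, ← hp, ← hr, ha]
      have hmul : (4 * q) * (p + r / (4 * q) * r) = 4 * (p * q) + r * r := by
        field_simp
      have h' := hX
      rw [← hmul] at h'
      exact (mul_eq_zero.mp h').resolve_left h4q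
    have hy : φ (-((4 * a) • f) + h) = 0 := by
      simp only [map_add, map_neg, map_smul, smul_eq_mul, ← hq, ← hr, ha]
      field_simp
      try ring
    have hli : LinearIndependent k ![e + a • h, -((4 * a) • f) + h] := by
      rw [LinearIndependent.pair_iff]
      intro s t hst
      have h0 : b.repr (s • (e + a • h) + t • (-((4 * a) • f) + h)) = 0 := by
        rw [hst, map_zero]
      have hc0 : (b.repr (s • (e + a • h) + t • (-((4 * a) • f) + h))) 0 = s := by
        simp [he, hf, hh, Finsupp.single_apply]
      have hc2 : (b.repr (s • (e + a • h) + t • (-((4 * a) • f) + h))) 2 = s * a + t := by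
        simp [he, hf, hh, Finsupp.single_apply]
      rw [h0] at hc0 hc2
      simp only [Finsupp.coe_zero, Pi.zero_apply] at hc0 hc2
      constructor
      · exact hc0.symm
      · have := hc2
        rw [← hc0] at this
        simpa using this.symm
    exact spanEq _ _ hx hy hli

end
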